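/- arXiv:2406.14414 — 2 statements merged into one kernel-verified Lean document; each statement's English description precedes it below -/
import Mathlib

section
/- Let d ≥ 0 be an integer and set u = (d+1)k. Then the u×u matrix whose rows are indexed by the pairs (i,m) with 0 ≤ i ≤ k−1 and 0 ≤ m ≤ d, whose columns are indexed by j = 1, …, u, and whose ((i,m), j) entry is ξ^{i(j−1)}·(j−1)^m (with the convention 0^0 = 1), has nonzero determinant. -/
open Matrix Finset

private theorem aux_entry9 {K : Type*} [Field K] [CharZero K]
    (k d : ℕ) (hk : 1 ≤ k) (ξ : K) (hξ : IsPrimitiveRoot ξ k)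
    (i : Fin k) (m : Fin (d+1)) (N : ℕ) :
    ξ ^ ((i : ℕ) * N) * ((N : K)) ^ (m : ℕ) =
      ∑ r : Fin k × Fin (d+1),
        (ξ ^ ((i : ℕ) * (r.1 : ℕ)) * ((m : ℕ).choose (r.2 : ℕ) : K)
            * ((r.1 : ℕ) : K) ^ ((m : ℕ) - (r.2 : ℕ)))
          * (if (r.1 : ℕ) = N % k then ((k * (N / k) : ℕ) : K) ^ (r.2 : ℕ) else 0) := by
  rw [Fintype.sum_prod_type]
  have hk0 : 0 < k := hk
  rw [Finset.sum_eq_single (⟨N % k, Nat.mod_lt _ hk0⟩ : Fin k)]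
  · simp only [mul_ite, mul_zero, if_pos rfl, if_true]
    have h1 : ξ ^ ((i : ℕ) * N) = ξ ^ ((i : ℕ) * (N % k)) := by
      conv_lhs => rw [← Nat.mod_add_div N k]
      rw [Nat.mul_add, pow_add, mul_left_comm (i : ℕ) k (N / k), pow_mul ξ k, hξ.pow_eq_one,
        one_pow, mul_one]
    have hx : ((k * (N / k) : ℕ) : K) + ((N % k : ℕ) : K) = (N : K) := by
      rw [← Nat.cast_add, Nat.div_add_mod]
    have h2 : (N : K) ^ (m : ℕ) =
        ∑ l : Fin (d+1), ((m : ℕ).choose (l : ℕ) : K) * ((N % k : ℕ) : K) ^ ((m : ℕ) - (l : ℕ))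
          * ((k * (N / k) : ℕ) : K) ^ (l : ℕ) := by
      rw [Fin.sum_univ_eq_sum_range
        (fun l => ((m : ℕ).choose l : K) * ((N % k : ℕ) : K) ^ ((m : ℕ) - l)
          * ((k * (N / k) : ℕ) : K) ^ l)]
      rw [← Finset.sum_subset (Finset.range_subset_range.mpr (Nat.succ_le_of_lt m.isLt))]
      · rw [← hx, add_pow]
        apply Finset.sum_congr rfl
        intro l _
        ring
      · intro l _ hl
        rw [Nat.choose_eq_zero_of_lt (by simpa using hl)]
        simp
    rw [h1, h2, Finset.mul_sum]
    apply Finset.sum_congr rfl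
    intro l _
    ring
  · intro b _ hb
    apply Finset.sum_eq_zero
    intro y _
    rw [if_neg, mul_zero]
    intro h
    exact hb (Fin.ext (by simpa using h))
  · intro h
    exact absurd (Finset.mem_univ _) h

private theorem aux_detP9 {K : Type*} [Field K] [CharZero K]
    (k d : ℕ) (ξ : K) (hξ : IsPrimitiveRoot ξ k) :
    (Matrix.of fun p r : Fin k × Fin (d+1) =>
      ξ ^ ((p.1 : ℕ) * (r.1 : ℕ)) * (((p.2 : ℕ).choose (r.2 : ℕ) : ℕ) : K)
        * ((r.1 : ℕ) : K) ^ ((p.2 : ℕ) - (r.2 : ℕ))).det ≠ 0 := by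
  set P : Matrix (Fin k × Fin (d+1)) (Fin k × Fin (d+1)) K :=
    Matrix.of fun p r =>
      ξ ^ ((p.1 : ℕ) * (r.1 : ℕ)) * (((p.2 : ℕ).choose (r.2 : ℕ) : ℕ) : K)
        * ((r.1 : ℕ) : K) ^ ((p.2 : ℕ) - (r.2 : ℕ)) with hP
  have hBT : Pᵀ.BlockTriangular (fun r => r.2) := by
    intro p q h
    simp only [hP, transpose_apply, of_apply]
    rw [Nat.choose_eq_zero_of_lt (by exact_mod_cast h)]
    simp
  have hdt : P.det = Pᵀ.det := (Matrix.det_transpose P).symm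
  rw [hdt, hBT.det_fintype]
  apply Finset.prod_ne_zero_iff.mpr
  intro m _
  let e : Fin k ≃ {r : Fin k × Fin (d+1) // r.2 = m} :=
    { toFun := fun a => ⟨(a, m), rfl⟩
      invFun := fun p => p.1.1
      left_inv := fun a => rfl
      right_inv := fun p => Subtype.ext (Prod.ext rfl p.2.symm) }
  have he : Pᵀ.toSquareBlock (fun r => r.2) m =
      ((Matrix.vandermonde fun a : Fin k => ξ ^ (a : ℕ)).submatrix e.symm e.symm) := by
    ext p q
    simp only [Matrix.toSquareBlock_def, submatrix_apply, vandermonde_apply, hP,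
      transpose_apply, of_apply]
    have hp2 : (p.1.2 : ℕ) = (m : ℕ) := congrArg Fin.val p.2
    have hq2 : (q.1.2 : ℕ) = (m : ℕ) := congrArg Fin.val q.2
    rw [hq2, hp2]
    simp only [Nat.choose_self, Nat.cast_one, mul_one, Nat.sub_self, pow_zero, ← pow_mul]
    congr 1
    exact Nat.mul_comm _ _
  rw [he, Matrix.det_submatrix_equiv_self, Matrix.det_vandermonde_ne_zero_iff]
  intro a b hab
  exact Fin.ext (hξ.pow_inj a.isLt b.isLt hab)

private theorem aux_detR9 {K : Type*} [Field K] [CharZero K] (k d : ℕ) (hk : 1 ≤ k) :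
    (Matrix.of fun r s : Fin k × Fin (d+1) =>
      if r.1 = s.1 then ((k * (s.2 : ℕ) : ℕ) : K) ^ (r.2 : ℕ) else 0).det ≠ 0 := by
  set V : Fin k → Matrix (Fin (d+1)) (Fin (d+1)) K :=
    fun _ => (Matrix.vandermonde fun b : Fin (d+1) => ((k * (b : ℕ) : ℕ) : K))ᵀ with hV
  have hEq : (Matrix.of fun r s : Fin k × Fin (d+1) =>
      if r.1 = s.1 then ((k * (s.2 : ℕ) : ℕ) : K) ^ (r.2 : ℕ) else 0) =
      (Matrix.blockDiagonal V).submatrix (Equiv.prodComm _ _) (Equiv.prodComm _ _) := by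
    ext r s
    simp [Matrix.blockDiagonal_apply, hV, Matrix.vandermonde_apply, eq_comm]
  rw [hEq, Matrix.det_submatrix_equiv_self, Matrix.det_blockDiagonal]
  apply Finset.prod_ne_zero_iff.mpr
  intro a _
  rw [hV, Matrix.det_transpose, Matrix.det_vandermonde_ne_zero_iff]
  intro b c hbc
  have h0 : ((k * (b : ℕ) : ℕ) : K) = ((k * (c : ℕ) : ℕ) : K) := hbc
  have : k * (b : ℕ) = k * (c : ℕ) := by exact_mod_cast h0
  exact Fin.ext (Nat.eq_of_mul_eq_mul_left hk this)

/-- for `u = (d+1)k`, the `u × u` matrix with rows indexed by pairs `(i, m)`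
(`0 ≤ i ≤ k-1`, `0 ≤ m ≤ d`), columns indexed by `j = 1, …, u`, and entry
`ξ^{i(j-1)}·(j-1)^m` (with `0^0 = 1`), has nonzero determinant. -/
theorem statement9 (K : Type*) [Field K] [CharZero K] (k : ℕ) (hk : 1 ≤ k)
    (ξ : K) (hξ : IsPrimitiveRoot ξ k) (d : ℕ) :
    (Matrix.of fun (p q : Fin k × Fin (d + 1)) =>
        ξ ^ ((p.1 : ℕ) * ((finProdFinEquiv q : Fin (k * (d + 1))) : ℕ))
          * (((finProdFinEquiv q : Fin (k * (d + 1))) : ℕ) : K) ^ (p.2 : ℕ)).det ≠ 0 := by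
  classical
  set n : Fin k × Fin (d+1) → ℕ := fun q => ((finProdFinEquiv q : Fin (k * (d + 1))) : ℕ) with hn
  set P : Matrix (Fin k × Fin (d+1)) (Fin k × Fin (d+1)) K :=
    Matrix.of fun p r =>
      ξ ^ ((p.1 : ℕ) * (r.1 : ℕ)) * (((p.2 : ℕ).choose (r.2 : ℕ) : ℕ) : K)
        * ((r.1 : ℕ) : K) ^ ((p.2 : ℕ) - (r.2 : ℕ)) with hP
  set Q : Matrix (Fin k × Fin (d+1)) (Fin k × Fin (d+1)) K :=
    Matrix.of fun r q =>
      if (r.1 : ℕ) = n q % k then ((k * (n q / k) : ℕ) : K) ^ (r.2 : ℕ) else 0 with hQ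
  have hM : (Matrix.of fun (p q : Fin k × Fin (d + 1)) =>
        ξ ^ ((p.1 : ℕ) * ((finProdFinEquiv q : Fin (k * (d + 1))) : ℕ))
          * (((finProdFinEquiv q : Fin (k * (d + 1))) : ℕ) : K) ^ (p.2 : ℕ)) = P * Q := by
    ext p q
    rw [Matrix.mul_apply]
    exact aux_entry9 k d hk ξ hξ p.1 p.2 (n q)
  rw [hM, Matrix.det_mul]
  refine mul_ne_zero (aux_detP9 k d ξ hξ) ?_
  -- Q is a column permutation of R
  set c : Equiv.Perm (Fin k × Fin (d+1)) :=
    (finProdFinEquiv).trans ((finCongr (mul_comm k (d+1))).trans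
      ((finProdFinEquiv).symm.trans (Equiv.prodComm (Fin (d+1)) (Fin k)))) with hc
  have hc1 : ∀ q, (((c q).1 : ℕ)) = n q % k := by
    intro q
    simp [hc, hn, Fin.coe_modNat]
  have hc2 : ∀ q, (((c q).2 : ℕ)) = n q / k := by
    intro q
    simp [hc, hn, Fin.coe_divNat]
  set R : Matrix (Fin k × Fin (d+1)) (Fin k × Fin (d+1)) K :=
    Matrix.of fun r s =>
      if r.1 = s.1 then ((k * (s.2 : ℕ) : ℕ) : K) ^ (r.2 : ℕ) else 0 with hR
  have hQR : Q = R.submatrix id c := by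
    ext r q
    simp only [hQ, hR, Matrix.submatrix_apply, Matrix.of_apply, id_eq]
    simp only [Fin.ext_iff, hc1, hc2]
  rw [hQR, Matrix.det_permute' c R]
  apply mul_ne_zero
  · rcases Int.units_eq_one_or (Equiv.Perm.sign c) with h | h <;> simp [h]
  · exact aux_detR9 k d hk
end

section
/- Let T ∈ M_k(R) be the matrix with entries T_{a,a+1} = 1 for 1 ≤ a ≤ k−1, T_{k,1} = t, and all other entries 0. Then T is invertible in M_k(R), T^k = t·I (where I is the identity matrix), and the K-subalgebra of M_k(R) generated by T, T^{−1} and all diagonal matrices with entries in K is the whole matrix algebra M_k(R). -/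
open Matrix

lemma st19_pow_entry {K : Type*} [Field K] {k : ℕ} (hk : 1 ≤ k)
    (T : Matrix (Fin k) (Fin k) (LaurentPolynomial K))
    (hT : ∀ a b : Fin k, T a b =
      if (a : ℕ) + 1 = (b : ℕ) then 1
      else if (a : ℕ) = k - 1 ∧ (b : ℕ) = 0 then LaurentPolynomial.T 1
      else 0) :
    ∀ n, n ≤ k → ∀ a b : Fin k, (T ^ n) a b =
      if (a : ℕ) + n = (b : ℕ) then 1
      else if (a : ℕ) + n = (b : ℕ) + k then LaurentPolynomial.T 1 else 0 := by
  intro n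
  induction n with
  | zero =>
    intro _ a b
    have ha := a.isLt; have hb := b.isLt
    rw [pow_zero]
    rcases eq_or_ne a b with rfl | hab
    · rw [Matrix.one_apply_eq, if_pos (by omega)]
    · have hv : (a : ℕ) ≠ (b : ℕ) := fun h => hab (Fin.ext h)
      rw [Matrix.one_apply_ne hab, if_neg (by omega), if_neg (by omega)]
  | succ n ih =>
    intro hn a b
    have hn' : n ≤ k := Nat.le_of_succ_le hn
    have ha := a.isLt; have hb := b.isLt
    rw [pow_succ, Matrix.mul_apply]
    obtain ⟨m, hm, hm2⟩ : ∃ m, m < k ∧ (m = ↑a + n ∨ m + k = ↑a + n) := by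
      rcases Nat.lt_or_ge (↑a + n) k with h | h
      exacts [⟨↑a + n, h, Or.inl rfl⟩, ⟨↑a + n - k, by omega, Or.inr (by omega)⟩]
    rw [Finset.sum_eq_single (⟨m, hm⟩ : Fin k)]
    · rw [ih hn', hT]
      have hc : ((⟨m, hm⟩ : Fin k) : ℕ) = m := rfl
      split_ifs <;> first
        | (exfalso; omega)
        | simp
    · intro c _ hne
      have hc := c.isLt
      have hcne : (c : ℕ) ≠ m := fun h => hne (Fin.ext h)
      rw [ih hn']
      split_ifs with h1 h2
      · exfalso; omega
      · exfalso; omega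
      · exact zero_mul _
    · intro h; exact absurd (Finset.mem_univ _) h

lemma st19_sandwich {K : Type*} [Field K] {k : ℕ}
    (M : Matrix (Fin k) (Fin k) (LaurentPolynomial K)) (a b : Fin k) :
    Matrix.single a a 1 * M * Matrix.single b b 1 = Matrix.single a b (M a b) := by
  apply Matrix.ext; intro i j
  rcases eq_or_ne j b with rfl | hj
  · rcases eq_or_ne i a with rfl | hi
    · rw [Matrix.mul_single_apply_same,
        Matrix.single_mul_apply_same, one_mul, mul_one,
        Matrix.single_apply_same]
    · rw [Matrix.mul_single_apply_same,
        Matrix.single_mul_apply_of_ne _ _ _ _ _ hi, zero_mul,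
        Matrix.single_apply_of_row_ne (Ne.symm hi)]
  · rw [Matrix.mul_single_apply_of_ne _ _ _ _ _ hj,
      Matrix.single_apply_of_col_ne _ _ (Ne.symm hj)]

/-- the matrix `T` over the Laurent polynomial ring `R = K[t,t⁻¹]` with
`T_{a,a+1} = 1` (`1 ≤ a ≤ k-1`), `T_{k,1} = t` and all other entries `0` is invertible,
satisfies `T^k = t·I`, and the `K`-subalgebra of `M_k(R)` generated by `T`, `T⁻¹` and all
diagonal matrices with entries in `K` is the whole matrix algebra `M_k(R)`. -/
theorem statement19 (K : Type*) [Field K] (k : ℕ) (hk : 1 ≤ k)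
    (T : Matrix (Fin k) (Fin k) (LaurentPolynomial K))
    (hT : ∀ a b : Fin k, T a b =
      if (a : ℕ) + 1 = (b : ℕ) then 1
      else if (a : ℕ) = k - 1 ∧ (b : ℕ) = 0 then LaurentPolynomial.T 1
      else 0) :
    IsUnit T ∧
    T ^ k = (LaurentPolynomial.T 1 : LaurentPolynomial K) • (1 : Matrix (Fin k) (Fin k) (LaurentPolynomial K)) ∧
    Algebra.adjoin K
      ({T, T⁻¹} ∪
        {M : Matrix (Fin k) (Fin k) (LaurentPolynomial K) |
          ∃ dg : Fin k → K,
            M = Matrix.diagonal fun a => algebraMap K (LaurentPolynomial K) (dg a)})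
      = ⊤ := by
  have key : ∀ (c d : LaurentPolynomial K),
      (c • (1 : Matrix (Fin k) (Fin k) (LaurentPolynomial K))) * (d • 1) = (c * d) • 1 := by
    intro c d
    rw [smul_mul_assoc, mul_smul_comm, smul_smul, one_mul]
  -- T ^ k = t • 1
  have hTk : T ^ k = (LaurentPolynomial.T 1 : LaurentPolynomial K) • 1 := by
    ext a b
    rw [st19_pow_entry hk T hT k le_rfl, Matrix.smul_apply, Matrix.one_apply]
    have ha := a.isLt; have hb := b.isLt
    rcases eq_or_ne a b with rfl | hab
    · rw [if_neg (by omega), if_pos (by omega), if_pos rfl, smul_eq_mul, mul_one]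
    · have hv : (a : ℕ) ≠ (b : ℕ) := fun h => hab (Fin.ext h)
      rw [if_neg (by omega), if_neg (by omega), if_neg hab, smul_zero]
  -- invertibility
  have hIk : IsUnit (T ^ k) := by
    rw [hTk]
    refine isUnit_iff_exists.mpr ⟨(LaurentPolynomial.T (-1) : LaurentPolynomial K) • 1, ?_, ?_⟩ <;>
      rw [key, ← LaurentPolynomial.T_add] <;> norm_num
  have hU : IsUnit T := (isUnit_pow_iff (by omega : k ≠ 0)).mp hIk
  refine ⟨hU, hTk, ?_⟩
  -- the inverse explicitly
  have hTinv : T⁻¹ = (LaurentPolynomial.T (-1) : LaurentPolynomial K) • T ^ (k - 1) := by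
    apply Matrix.inv_eq_right_inv
    rw [mul_smul_comm, ← pow_succ', (by omega : k - 1 + 1 = k), hTk, smul_smul,
      ← LaurentPolynomial.T_add]
    norm_num
  set S := Algebra.adjoin K
      ({T, T⁻¹} ∪
        {M : Matrix (Fin k) (Fin k) (LaurentPolynomial K) |
          ∃ dg : Fin k → K,
            M = Matrix.diagonal fun a => algebraMap K (LaurentPolynomial K) (dg a)}) with hS
  have hTS : T ∈ S := Algebra.subset_adjoin (Or.inl (Or.inl rfl))
  have hTiS : T⁻¹ ∈ S := Algebra.subset_adjoin (Or.inl (Or.inr rfl))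
  have hdiag : ∀ dg : Fin k → K,
      (Matrix.diagonal fun a => algebraMap K (LaurentPolynomial K) (dg a)) ∈ S :=
    fun dg => Algebra.subset_adjoin (Or.inr ⟨dg, rfl⟩)
  -- diagonal idempotents
  have hE : ∀ a : Fin k, Matrix.single a a (1 : LaurentPolynomial K) ∈ S := by
    intro a
    have h := hdiag (fun i => if i = a then 1 else 0)
    have : (Matrix.diagonal fun i => algebraMap K (LaurentPolynomial K) (if i = a then 1 else 0))
        = Matrix.single a a (1 : LaurentPolynomial K) := by
      apply Matrix.ext; intro i j
      rcases eq_or_ne i j with rfl | hij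
      · rcases eq_or_ne i a with rfl | hia
        · rw [Matrix.diagonal_apply_eq, Matrix.single_apply_same, if_pos rfl, _root_.map_one]
        · rw [Matrix.diagonal_apply_eq, Matrix.single_apply_of_row_ne (Ne.symm hia),
            if_neg hia, _root_.map_zero]
      · rw [Matrix.diagonal_apply_ne _ hij,
          Matrix.single_apply_of_ne _ _ _ _ _ (fun h => hij (h.1.symm.trans h.2))]
    rwa [this] at h
  have hsand : ∀ M ∈ S, ∀ a b : Fin k, Matrix.single a b (M a b) ∈ S := by
    intro M hM a b
    rw [← st19_sandwich M a b]
    exact mul_mem (mul_mem (hE a) hM) (hE b)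
  set z0 : Fin k := ⟨0, hk⟩ with hz0
  set zl : Fin k := ⟨k - 1, by omega⟩ with hzl
  -- entries of T
  have hEone : ∀ a b : Fin k, (a : ℕ) + 1 = (b : ℕ) → Matrix.single a b (1 : LaurentPolynomial K) ∈ S := by
    intro a b h
    have := hsand T hTS a b
    rwa [hT, if_pos h] at this
  have hcorner : Matrix.single zl z0 (LaurentPolynomial.T 1 : LaurentPolynomial K) ∈ S := by
    have := hsand T hTS zl z0
    rwa [hT, if_neg (by simp [hzl, hz0]), if_pos (by simp [hzl, hz0])] at this
  -- entries of T⁻¹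
  have hTinv_entry : ∀ a b : Fin k, T⁻¹ a b =
      if (a : ℕ) + (k - 1) = (b : ℕ) then LaurentPolynomial.T (-1)
      else if (a : ℕ) + (k - 1) = (b : ℕ) + k then 1 else 0 := by
    intro a b
    rw [hTinv, Matrix.smul_apply, st19_pow_entry hk T hT (k - 1) (by omega)]
    split_ifs
    · rw [smul_eq_mul, mul_one]
    · rw [smul_eq_mul, ← LaurentPolynomial.T_add]; norm_num
    · exact smul_zero _
  have hEoneback : ∀ a b : Fin k, (b : ℕ) + 1 = (a : ℕ) → Matrix.single a b (1 : LaurentPolynomial K) ∈ S := by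
    intro a b h
    have := hsand T⁻¹ hTiS a b
    have ha := a.isLt; have hb := b.isLt
    rwa [hTinv_entry, if_neg (by omega), if_pos (by omega)] at this
  have hcornerinv : Matrix.single z0 zl (LaurentPolynomial.T (-1) : LaurentPolynomial K) ∈ S := by
    have := hsand T⁻¹ hTiS z0 zl
    rwa [hTinv_entry, if_pos (by simp [hzl, hz0])] at this
  -- rows and columns of ones
  have hrow : ∀ b : Fin k, Matrix.single z0 b (1 : LaurentPolynomial K) ∈ S := by
    have h : ∀ m (hm : m < k), Matrix.single z0 (⟨m, hm⟩ : Fin k) (1 : LaurentPolynomial K) ∈ S := by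
      intro m
      induction m with
      | zero => intro hm; exact hE z0
      | succ m ih =>
        intro hm
        have hm' : m < k := by omega
        have h2 := hEone ⟨m, hm'⟩ ⟨m + 1, hm⟩ rfl
        have := mul_mem (ih hm') h2
        rwa [Matrix.single_mul_single_same, one_mul] at this
    intro b
    have := h b b.isLt
    rwa [Fin.eta] at this
  have hcol : ∀ a : Fin k, Matrix.single a z0 (1 : LaurentPolynomial K) ∈ S := by
    have h : ∀ m (hm : m < k), Matrix.single (⟨m, hm⟩ : Fin k) z0 (1 : LaurentPolynomial K) ∈ S := by
      intro m
      induction m with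
      | zero => intro hm; exact hE z0
      | succ m ih =>
        intro hm
        have hm' : m < k := by omega
        have h2 := hEoneback ⟨m + 1, hm⟩ ⟨m, hm'⟩ rfl
        have := mul_mem h2 (ih hm')
        rwa [Matrix.single_mul_single_same, one_mul] at this
    intro a
    have := h a a.isLt
    rwa [Fin.eta] at this
  -- powers of t at (0,0)
  have hu1 : Matrix.single z0 z0 (LaurentPolynomial.T 1 : LaurentPolynomial K) ∈ S := by
    have := mul_mem (hrow zl) hcorner
    rwa [Matrix.single_mul_single_same, one_mul] at this
  have hum1 : Matrix.single z0 z0 (LaurentPolynomial.T (-1) : LaurentPolynomial K) ∈ S := by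
    have := mul_mem hcornerinv (hcol zl)
    rwa [Matrix.single_mul_single_same, mul_one] at this
  have hun : ∀ n : ℤ, Matrix.single z0 z0 (LaurentPolynomial.T n : LaurentPolynomial K) ∈ S := by
    intro n
    induction n using Int.induction_on with
    | zero => rw [LaurentPolynomial.T_zero]; exact hE z0
    | succ i ih =>
      have := mul_mem ih hu1
      rwa [Matrix.single_mul_single_same, ← LaurentPolynomial.T_add] at this
    | pred i ih =>
      have := mul_mem ih hum1
      rwa [Matrix.single_mul_single_same, ← LaurentPolynomial.T_add] at this
  -- all single-entry matrices
  have hstd : ∀ (a b : Fin k) (p : LaurentPolynomial K), Matrix.single a b p ∈ S := by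
    intro a b p
    induction p using LaurentPolynomial.induction_on' with
    | add p q hp hq => rw [single_add]; exact add_mem hp hq
    | C_mul_T n c =>
      have h1 : Matrix.single a b (LaurentPolynomial.T n : LaurentPolynomial K) ∈ S := by
        have := mul_mem (mul_mem (hcol a) (hun n)) (hrow b)
        rwa [Matrix.single_mul_single_same, Matrix.single_mul_single_same, one_mul, mul_one]
          at this
      have h2 : (LaurentPolynomial.C c : LaurentPolynomial K) * LaurentPolynomial.T n
          = c • LaurentPolynomial.T n := by
        rw [LaurentPolynomial.C_eq_algebraMap, Algebra.smul_def]
      rw [h2, ← smul_single]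
      exact SMulMemClass.smul_mem c h1
  rw [eq_top_iff]
  intro M _
  rw [matrix_eq_sum_single M]
  exact sum_mem fun i _ => sum_mem fun j _ => hstd i j _
end
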